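/- With respect to the natural inner product on double forms, the adjoint of multiplication by g is the contraction map c: for all double forms ω1, ω2, one has ⟨gω1, ω2⟩ = ⟨ω1, cω2⟩. -/
import Mathlib


open scoped BigOperators

namespace DoubleForm

/-- The model Euclidean vector space of dimension `n` (with the standard inner product). -/
abbrev V (n : ℕ) := Fin n → ℝ

/-- The standard orthonormal basis of `V n`. -/
def E (n : ℕ) (j : Fin n) : V n := fun k => if k = j then 1 else 0

/-- Raw double forms of bidegree `(p,q)`: real valued functions of `p` vectors and `q` vectors.
Genuine double forms are singled out by `IsDF`. -/
abbrev DF (n p q : ℕ) := (Fin p → V n) → (Fin q → V n) → ℝ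

/-- `ω` is a genuine double form: multilinear and alternating in the first `p`
and in the last `q` arguments. -/
def IsDF {n p q : ℕ} (ω : DF n p q) : Prop :=
  ∃ F : AlternatingMap ℝ (V n) (AlternatingMap ℝ (V n) ℝ (Fin q)) (Fin p),
    ∀ x y, ω x y = F x y

/-- Transport of double forms along equalities of the degrees. -/
def DFcast {n p q p' q' : ℕ} (h1 : p = p') (h2 : q = q') (ω : DF n p q) : DF n p' q' :=
  fun x y => ω (fun i => x (Fin.cast h1 i)) (fun j => y (Fin.cast h2 j))

/-- The product of double forms (Kulkarni's product). -/
noncomputable def mul {n p q r s : ℕ} (ω : DF n p q) (η : DF n r s) :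
    DF n (p + r) (q + s) := fun x y =>
  (((p.factorial * r.factorial * q.factorial * s.factorial : ℕ) : ℝ))⁻¹ *
    ∑ σ : Equiv.Perm (Fin (p + r)), ∑ ρ : Equiv.Perm (Fin (q + s)),
      ((Equiv.Perm.sign σ : ℤ) : ℝ) * ((Equiv.Perm.sign ρ : ℤ) : ℝ) *
        ω (fun i => x (σ (Fin.castAdd r i))) (fun j => y (ρ (Fin.castAdd s j))) *
        η (fun i => x (σ (Fin.natAdd p i))) (fun j => y (ρ (Fin.natAdd q j)))

/-- The metric `g` as a double form of bidegree `(1,1)`. -/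
noncomputable def gm (n : ℕ) : DF n 1 1 := fun x y => ∑ j : Fin n, x 0 j * y 0 j

/-- Powers `g^l` of the metric in the algebra of double forms. -/
noncomputable def gpow (n : ℕ) : (l : ℕ) → DF n l l
  | 0 => fun _ _ => 1
  | l + 1 => mul (gpow n l) (gm n)

/-- The contraction map `c : D^{p,q} → D^{p-1,q-1}` (zero if `p = 0` or `q = 0`). -/
noncomputable def contr {n : ℕ} : ∀ {p q : ℕ}, DF n p q → DF n (p - 1) (q - 1)
  | p + 1, q + 1, ω => fun x y =>
      ∑ j : Fin n, ω (Fin.cons (E n j) x) (Fin.cons (E n j) y)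
  | 0, _, _ => 0
  | _ + 1, 0, _ => 0

/-- Iterated contraction `c^k`. -/
noncomputable def ck {n : ℕ} : ∀ (k : ℕ) {p q : ℕ}, DF n p q → DF n (p - k) (q - k)
  | 0, _, _, ω => ω
  | k + 1, _, _, ω => contr (ck k ω)

/-- The natural inner product on `D^{p,q}`. -/
noncomputable def innerDF {n p q : ℕ} (ω θ : DF n p q) : ℝ :=
  (((p.factorial * q.factorial : ℕ) : ℝ))⁻¹ *
    ∑ f : Fin p → Fin n, ∑ g : Fin q → Fin n,
      ω (fun i => E n (f i)) (fun j => E n (g j)) *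
        θ (fun i => E n (f i)) (fun j => E n (g j))

/-- The natural inner product extended to all bidegrees: distinct bidegrees are orthogonal. -/
noncomputable def innerDF2 {n p q r s : ℕ} (ω : DF n p q) (θ : DF n r s) : ℝ :=
  if h : p = r ∧ q = s then innerDF (DFcast h.1 h.2 ω) θ else 0

/-- Determinant of the `n × n` matrix whose first `p` rows are the basis vectors `E (f i)`
and whose remaining rows are the vectors `x`. -/
noncomputable def rowsDet {n : ℕ} (p : ℕ) (f : Fin p → Fin n) (x : Fin (n - p) → V n) : ℝ :=
  Matrix.det (Matrix.of fun i k : Fin n =>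
    if h : (i : ℕ) < p then E n (f ⟨(i : ℕ), h⟩) k
    else x ⟨(i : ℕ) - p, by have := i.isLt; omega⟩ k)

/-- The Hodge star operator extended to double forms, `D^{p,q} → D^{n-p,n-q}`. -/
noncomputable def hstar {n p q : ℕ} (ω : DF n p q) : DF n (n - p) (n - q) := fun x y =>
  (((p.factorial * q.factorial : ℕ) : ℝ))⁻¹ *
    ∑ f : Fin p → Fin n, ∑ g : Fin q → Fin n,
      ω (fun i => E n (f i)) (fun j => E n (g j)) * rowsDet p f x * rowsDet q g y

/-- The first Bianchi sum `B : D^{p,q} → D^{p+1,q-1}` (zero if `q = 0`). -/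
noncomputable def bianchi {n : ℕ} : ∀ {p q : ℕ}, DF n p q → DF n (p + 1) (q - 1)
  | p, q + 1, ω => fun x y =>
      ∑ j : Fin (p + 1), (-1 : ℝ) ^ ((j : ℕ) + 1) *
        ω (fun i => x (j.succAbove i)) (Fin.cons (x j) y)
  | _, 0, _ => 0

/-- Symmetric double forms of bidegree `(p,p)`. -/
def IsSymm {n p : ℕ} (ω : DF n p p) : Prop := ∀ x y, ω x y = ω y x

/-- The total (bigraded) space of double forms. -/
abbrev DT (n : ℕ) := ∀ p q : ℕ, DF n p q

/-- Embedding of the component `D^{p,q}` into the total space. -/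
noncomputable def emb {n : ℕ} (p q : ℕ) (ω : DF n p q) : DT n := fun p' q' =>
  if h : p = p' ∧ q = q' then DFcast h.1 h.2 ω else 0


section Aux

/-- evaluation of an alternating map at a point, as a linear map -/
def evalAM {n q : ℕ} (y : Fin q → V n) :
    (AlternatingMap ℝ (V n) ℝ (Fin q)) →ₗ[ℝ] ℝ where
  toFun F := F y
  map_add' _ _ := rfl
  map_smul' _ _ := rfl

lemma perm_collapse {n m : ℕ} (G : (Fin m → V n) → ℝ)
    (hG : ∃ F : AlternatingMap ℝ (V n) ℝ (Fin m), ∀ v, G v = F v)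
    (A : (Fin m → Fin n) → ℝ) :
    ∑ σ : Equiv.Perm (Fin m), ∑ f : Fin m → Fin n,
      ((Equiv.Perm.sign σ : ℤ) : ℝ) * A (fun j => f (σ j)) * G (fun i => E n (f i))
    = (m.factorial : ℝ) * ∑ f : Fin m → Fin n, A f * G (fun i => E n (f i)) := by
  obtain ⟨F, hF⟩ := hG
  have inner : ∀ σ : Equiv.Perm (Fin m),
      (∑ f : Fin m → Fin n,
        ((Equiv.Perm.sign σ : ℤ) : ℝ) * A (fun j => f (σ j)) * G (fun i => E n (f i)))
      = ∑ f : Fin m → Fin n, A f * G (fun i => E n (f i)) := by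
    intro σ
    set e := Equiv.arrowCongr σ (Equiv.refl (Fin n)) with he
    rw [← Equiv.sum_comp e (fun f => ((Equiv.Perm.sign σ : ℤ) : ℝ) *
        A (fun j => f (σ j)) * G (fun i => E n (f i)))]
    refine Finset.sum_congr rfl fun f _ => ?_
    have h3 : ((Equiv.Perm.sign σ : ℤ) : ℝ) * ((Equiv.Perm.sign σ : ℤ) : ℝ) = 1 := by
      rcases Int.units_eq_one_or (Equiv.Perm.sign σ) with h | h <;> simp [h]
    show ((Equiv.Perm.sign σ : ℤ) : ℝ) * A (fun j => (e f) (σ j)) * G (fun i => E n ((e f) i))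
        = A f * G (fun i => E n (f i))
    have h4 : (fun j => (e f) (σ j)) = f := by funext j; simp [he]
    have h2 : G (fun i => E n ((e f) i)) =
        ((Equiv.Perm.sign σ : ℤ) : ℝ) * G (fun i => E n (f i)) := by
      rw [hF, hF]
      have : (fun i => E n ((e f) i)) = (fun i => E n (f i)) ∘ ⇑(σ⁻¹) := rfl
      rw [this, AlternatingMap.map_perm, Equiv.Perm.sign_inv]
      rcases Int.units_eq_one_or (Equiv.Perm.sign σ) with h | h <;> simp [h]
    rw [h4, h2, ← mul_assoc, mul_comm _ (A f), mul_assoc, mul_assoc, ← mul_assoc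
      ((Equiv.Perm.sign σ : ℤ) : ℝ), h3, one_mul]
  rw [Finset.sum_congr rfl fun σ _ => inner σ, Finset.sum_const, Finset.card_univ,
    Fintype.card_perm, Fintype.card_fin, nsmul_eq_mul]

lemma gmE (n : ℕ) (k k' : Fin n) :
    gm n (fun _ => E n k) (fun _ => E n k') = if k = k' then 1 else 0 := by
  show (∑ j : Fin n, E n k j * E n k' j) = _
  simp only [E, ite_mul, one_mul, zero_mul]
  rw [Finset.sum_ite_eq' Finset.univ k (fun x => if x = k' then (1:ℝ) else 0)]
  simp

lemma innerDF_cast {n p q p' q' : ℕ} (h1 : p = p') (h2 : q = q')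
    (ω : DF n p q) (θ : DF n p' q') :
    innerDF (DFcast h1 h2 ω) θ = innerDF ω (DFcast h1.symm h2.symm θ) := by
  subst h1; subst h2; rfl

lemma sum_swap4 {α β γ δ : Type*} [Fintype α] [Fintype β] [Fintype γ] [Fintype δ]
    (T : α → β → γ → δ → ℝ) :
    ∑ a : α, ∑ b : β, ∑ c : γ, ∑ d : δ, T a b c d
      = ∑ d : δ, ∑ b : β, ∑ c : γ, ∑ a : α, T a b c d :=
  calc ∑ a : α, ∑ b : β, ∑ c : γ, ∑ d : δ, T a b c d
      = ∑ a : α, ∑ b : β, ∑ d : δ, ∑ c : γ, T a b c d :=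
        Finset.sum_congr rfl fun a _ => Finset.sum_congr rfl fun b _ => Finset.sum_comm
    _ = ∑ a : α, ∑ d : δ, ∑ b : β, ∑ c : γ, T a b c d :=
        Finset.sum_congr rfl fun a _ => Finset.sum_comm
    _ = ∑ d : δ, ∑ a : α, ∑ b : β, ∑ c : γ, T a b c d := Finset.sum_comm
    _ = ∑ d : δ, ∑ b : β, ∑ a : α, ∑ c : γ, T a b c d :=
        Finset.sum_congr rfl fun d _ => Finset.sum_comm
    _ = ∑ d : δ, ∑ b : β, ∑ c : γ, ∑ a : α, T a b c d :=
        Finset.sum_congr rfl fun d _ => Finset.sum_congr rfl fun b _ => Finset.sum_comm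

lemma sum_swap3 {α β γ : Type*} [Fintype α] [Fintype β] [Fintype γ]
    (T : α → β → γ → ℝ) :
    ∑ a : α, ∑ b : β, ∑ c : γ, T a b c = ∑ c : γ, ∑ a : α, ∑ b : β, T a b c :=
  calc ∑ a : α, ∑ b : β, ∑ c : γ, T a b c
      = ∑ a : α, ∑ c : γ, ∑ b : β, T a b c :=
        Finset.sum_congr rfl fun a _ => Finset.sum_comm
    _ = ∑ c : γ, ∑ a : α, ∑ b : β, T a b c := Finset.sum_comm

end Aux

section Aux2

lemma flatten4 {α β γ δ : Type*} [Fintype α] [Fintype β] [Fintype γ] [Fintype δ]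
    (c : ℝ) (X : γ → δ → α → β → ℝ) (θ : α → β → ℝ) :
    ∑ a : α, ∑ b : β, (c * ∑ cc : γ, ∑ d : δ, X cc d a b) * θ a b
      = c * ∑ d : δ, ∑ b : β, ∑ cc : γ, ∑ a : α, X cc d a b * θ a b := by
  have h1 : ∀ a b, (c * ∑ cc : γ, ∑ d : δ, X cc d a b) * θ a b
      = ∑ cc : γ, ∑ d : δ, c * (X cc d a b * θ a b) := by
    intro a b
    rw [mul_assoc, Finset.sum_mul, Finset.mul_sum]
    refine Finset.sum_congr rfl fun cc _ => ?_
    rw [Finset.sum_mul, Finset.mul_sum]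
  calc ∑ a : α, ∑ b : β, (c * ∑ cc : γ, ∑ d : δ, X cc d a b) * θ a b
      = ∑ a : α, ∑ b : β, ∑ cc : γ, ∑ d : δ, c * (X cc d a b * θ a b) := by
        refine Finset.sum_congr rfl fun a _ => Finset.sum_congr rfl fun b _ => h1 a b
    _ = ∑ d : δ, ∑ b : β, ∑ cc : γ, ∑ a : α, c * (X cc d a b * θ a b) :=
        sum_swap4 (fun a b cc d => c * (X cc d a b * θ a b))
    _ = c * ∑ d : δ, ∑ b : β, ∑ cc : γ, ∑ a : α, X cc d a b * θ a b := by
        simp only [← Finset.mul_sum]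

lemma pull2 {α β : Type*} [Fintype α] [Fintype β] (c : ℝ) (X : α → β → ℝ) :
    ∑ a : α, ∑ b : β, c * X a b = c * ∑ a : α, ∑ b : β, X a b := by
  simp only [← Finset.mul_sum]

lemma pull1 {α : Type*} [Fintype α] (c : ℝ) (X : α → ℝ) :
    ∑ a : α, c * X a = c * ∑ a : α, X a := by
  simp only [← Finset.mul_sum]

def consCastEquiv (n p : ℕ) (hp : 1 + p = p + 1) :
    (Fin n × (Fin p → Fin n)) ≃ (Fin (1 + p) → Fin n) :=
  (Fin.consEquiv (fun _ : Fin (p + 1) => Fin n)).trans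
    (Equiv.arrowCongr (finCongr hp.symm) (Equiv.refl (Fin n)))

lemma consCastEquiv_apply (n p : ℕ) (hp : 1 + p = p + 1) (k : Fin n) (f' : Fin p → Fin n)
    (j : Fin (1 + p)) :
    consCastEquiv n p hp (k, f') j
      = (Fin.cons k f' : Fin (p + 1) → Fin n) (Fin.cast hp j) := by
  simp [consCastEquiv, Equiv.arrowCongr]

lemma cast_castAdd_zero {p : ℕ} (hp : 1 + p = p + 1) (i : Fin 1) :
    Fin.cast hp (Fin.castAdd p i) = 0 := by
  apply Fin.ext
  have hi := i.isLt
  simp only [Fin.coe_cast, Fin.coe_castAdd, Fin.val_zero]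
  omega

lemma cast_natAdd' {p : ℕ} (hp : 1 + p = p + 1) (i : Fin p) :
    Fin.cast hp (Fin.natAdd 1 i) = i.succ := by
  apply Fin.ext
  simp [Nat.add_comm]

lemma cast_cast {p : ℕ} (hp : 1 + p = p + 1) (i : Fin (p + 1)) :
    Fin.cast hp (Fin.cast hp.symm i) = i := by
  apply Fin.ext; simp

lemma Ecomp_cons (n : ℕ) {m : ℕ} (k : Fin n) (f' : Fin m → Fin n) :
    (fun i : Fin (m + 1) => E n ((Fin.cons k f' : Fin (m + 1) → Fin n) i))
      = (Fin.cons (E n k) (fun i => E n (f' i)) : Fin (m + 1) → V n) := by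
  funext i
  refine Fin.cases ?_ ?_ i
  · simp
  · intro j; simp

end Aux2

lemma const_combine (p q : ℕ) (S : ℝ) :
    ((((1 + p).factorial * (1 + q).factorial : ℕ)) : ℝ)⁻¹ *
      ((((Nat.factorial 1 * p.factorial * Nat.factorial 1 * q.factorial : ℕ)) : ℝ)⁻¹ *
        (((1 + p).factorial : ℝ) * (((1 + q).factorial : ℝ) * S)))
    = (((p.factorial * q.factorial : ℕ)) : ℝ)⁻¹ * S := by
  have h1 : ((1 + p).factorial : ℝ) ≠ 0 := Nat.cast_ne_zero.mpr (Nat.factorial_ne_zero _)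
  have h2 : ((1 + q).factorial : ℝ) ≠ 0 := Nat.cast_ne_zero.mpr (Nat.factorial_ne_zero _)
  have h3 : ((p.factorial : ℕ) : ℝ) ≠ 0 := Nat.cast_ne_zero.mpr (Nat.factorial_ne_zero _)
  have h4 : ((q.factorial : ℕ) : ℝ) ≠ 0 := Nat.cast_ne_zero.mpr (Nat.factorial_ne_zero _)
  push_cast
  rw [Nat.factorial_one]
  field_simp
  ring

set_option maxHeartbeats 4000000 in
theorem g_mul_adjoint_contraction (n p q : ℕ) (ω₁ : DF n p q) (ω₂ : DF n (p + 1) (q + 1))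
    (h₁ : IsDF ω₁) (h₂ : IsDF ω₂) :
    innerDF2 (mul (gm n) ω₁) ω₂ = innerDF ω₁ (contr ω₂) := by
  clear h₁
  obtain ⟨F₂, hF₂⟩ := h₂
  have hp : 1 + p = p + 1 := Nat.add_comm 1 p
  have hq : 1 + q = q + 1 := Nat.add_comm 1 q
  rw [innerDF2, dif_pos (⟨hp, hq⟩ : (1 + p = p + 1) ∧ (1 + q = q + 1)), innerDF_cast]
  have hS : (∑ f : Fin (1 + p) → Fin n, ∑ g : Fin (1 + q) → Fin n,
        gm n (fun i => E n (f (Fin.castAdd p i))) (fun j => E n (g (Fin.castAdd q j))) *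
          ω₁ (fun i => E n (f (Fin.natAdd 1 i))) (fun j => E n (g (Fin.natAdd 1 j))) *
          DFcast hp.symm hq.symm ω₂ (fun i => E n (f i)) (fun j => E n (g j)))
      = ∑ f : Fin p → Fin n, ∑ g : Fin q → Fin n,
          ω₁ (fun i => E n (f i)) (fun j => E n (g j)) *
            contr ω₂ (fun i => E n (f i)) (fun j => E n (g j)) := by
    calc (∑ f : Fin (1 + p) → Fin n, ∑ g : Fin (1 + q) → Fin n,
        gm n (fun i => E n (f (Fin.castAdd p i))) (fun j => E n (g (Fin.castAdd q j))) *
          ω₁ (fun i => E n (f (Fin.natAdd 1 i))) (fun j => E n (g (Fin.natAdd 1 j))) *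
          DFcast hp.symm hq.symm ω₂ (fun i => E n (f i)) (fun j => E n (g j)))
        = ∑ x : Fin n × (Fin p → Fin n), ∑ g : Fin (1 + q) → Fin n,
            gm n (fun i => E n (consCastEquiv n p hp x (Fin.castAdd p i)))
                (fun j => E n (g (Fin.castAdd q j))) *
              ω₁ (fun i => E n (consCastEquiv n p hp x (Fin.natAdd 1 i)))
                (fun j => E n (g (Fin.natAdd 1 j))) *
              DFcast hp.symm hq.symm ω₂ (fun i => E n (consCastEquiv n p hp x i))
                (fun j => E n (g j)) :=
          (Equiv.sum_comp (consCastEquiv n p hp) (fun f => ∑ g : Fin (1 + q) → Fin n,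
            gm n (fun i => E n (f (Fin.castAdd p i))) (fun j => E n (g (Fin.castAdd q j))) *
              ω₁ (fun i => E n (f (Fin.natAdd 1 i))) (fun j => E n (g (Fin.natAdd 1 j))) *
              DFcast hp.symm hq.symm ω₂ (fun i => E n (f i)) (fun j => E n (g j)))).symm
      _ = ∑ x : Fin n × (Fin p → Fin n), ∑ y : Fin n × (Fin q → Fin n),
            gm n (fun i => E n (consCastEquiv n p hp x (Fin.castAdd p i)))
                (fun j => E n (consCastEquiv n q hq y (Fin.castAdd q j))) *
              ω₁ (fun i => E n (consCastEquiv n p hp x (Fin.natAdd 1 i)))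
                (fun j => E n (consCastEquiv n q hq y (Fin.natAdd 1 j))) *
              DFcast hp.symm hq.symm ω₂ (fun i => E n (consCastEquiv n p hp x i))
                (fun j => E n (consCastEquiv n q hq y j)) :=
          Finset.sum_congr rfl fun x _ =>
            (Equiv.sum_comp (consCastEquiv n q hq) (fun g : Fin (1 + q) → Fin n =>
              gm n (fun i => E n (consCastEquiv n p hp x (Fin.castAdd p i)))
                  (fun j => E n (g (Fin.castAdd q j))) *
                ω₁ (fun i => E n (consCastEquiv n p hp x (Fin.natAdd 1 i)))
                  (fun j => E n (g (Fin.natAdd 1 j))) *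
                DFcast hp.symm hq.symm ω₂ (fun i => E n (consCastEquiv n p hp x i))
                  (fun j => E n (g j)))).symm
      _ = ∑ k : Fin n, ∑ f' : Fin p → Fin n, ∑ y : Fin n × (Fin q → Fin n),
            gm n (fun i => E n (consCastEquiv n p hp (k, f') (Fin.castAdd p i)))
                (fun j => E n (consCastEquiv n q hq y (Fin.castAdd q j))) *
              ω₁ (fun i => E n (consCastEquiv n p hp (k, f') (Fin.natAdd 1 i)))
                (fun j => E n (consCastEquiv n q hq y (Fin.natAdd 1 j))) *
              DFcast hp.symm hq.symm ω₂ (fun i => E n (consCastEquiv n p hp (k, f') i))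
                (fun j => E n (consCastEquiv n q hq y j)) := Fintype.sum_prod_type _
      _ = ∑ k : Fin n, ∑ f' : Fin p → Fin n, ∑ k' : Fin n, ∑ g' : Fin q → Fin n,
            gm n (fun i => E n (consCastEquiv n p hp (k, f') (Fin.castAdd p i)))
                (fun j => E n (consCastEquiv n q hq (k', g') (Fin.castAdd q j))) *
              ω₁ (fun i => E n (consCastEquiv n p hp (k, f') (Fin.natAdd 1 i)))
                (fun j => E n (consCastEquiv n q hq (k', g') (Fin.natAdd 1 j))) *
              DFcast hp.symm hq.symm ω₂ (fun i => E n (consCastEquiv n p hp (k, f') i))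
                (fun j => E n (consCastEquiv n q hq (k', g') j)) :=
          Finset.sum_congr rfl fun k _ => Finset.sum_congr rfl fun f' _ =>
            Fintype.sum_prod_type _
      _ = ∑ k : Fin n, ∑ f' : Fin p → Fin n, ∑ k' : Fin n, ∑ g' : Fin q → Fin n,
            (if k = k' then (1 : ℝ) else 0) *
              ω₁ (fun i => E n (f' i)) (fun j => E n (g' j)) *
              F₂ (Fin.cons (E n k) (fun i => E n (f' i)))
                (Fin.cons (E n k') (fun j => E n (g' j))) := by
          refine Finset.sum_congr rfl fun k _ => Finset.sum_congr rfl fun f' _ =>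
            Finset.sum_congr rfl fun k' _ => Finset.sum_congr rfl fun g' _ => ?_
          have e1 : (fun i : Fin 1 =>
              E n (consCastEquiv n p hp (k, f') (Fin.castAdd p i))) = fun _ => E n k := by
            funext i
            rw [consCastEquiv_apply, cast_castAdd_zero hp i, Fin.cons_zero]
          have e2 : (fun i : Fin p =>
              E n (consCastEquiv n p hp (k, f') (Fin.natAdd 1 i))) = fun i => E n (f' i) := by
            funext i
            rw [consCastEquiv_apply, cast_natAdd' hp i, Fin.cons_succ]
          have e3 : (fun j : Fin 1 =>
              E n (consCastEquiv n q hq (k', g') (Fin.castAdd q j))) = fun _ => E n k' := by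
            funext j
            rw [consCastEquiv_apply, cast_castAdd_zero hq j, Fin.cons_zero]
          have e4 : (fun j : Fin q =>
              E n (consCastEquiv n q hq (k', g') (Fin.natAdd 1 j))) = fun j => E n (g' j) := by
            funext j
            rw [consCastEquiv_apply, cast_natAdd' hq j, Fin.cons_succ]
          have e5 : (fun i : Fin (p + 1) =>
              E n (consCastEquiv n p hp (k, f') (Fin.cast hp.symm i)))
              = Fin.cons (E n k) (fun i => E n (f' i)) := by
            funext i
            rw [consCastEquiv_apply, cast_cast hp i]
            exact congrFun (Ecomp_cons n k f') i
          have e6 : (fun j : Fin (q + 1) =>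
              E n (consCastEquiv n q hq (k', g') (Fin.cast hq.symm j)))
              = Fin.cons (E n k') (fun j => E n (g' j)) := by
            funext j
            rw [consCastEquiv_apply, cast_cast hq j]
            exact congrFun (Ecomp_cons n k' g') j
          simp only [DFcast, hF₂]
          rw [e1, e2, e3, e4, e5, e6, gmE]
      _ = ∑ k : Fin n, ∑ f' : Fin p → Fin n, ∑ g' : Fin q → Fin n,
            ω₁ (fun i => E n (f' i)) (fun j => E n (g' j)) *
              F₂ (Fin.cons (E n k) (fun i => E n (f' i)))
                (Fin.cons (E n k) (fun j => E n (g' j))) := by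
          refine Finset.sum_congr rfl fun k _ => Finset.sum_congr rfl fun f' _ => ?_
          rw [Finset.sum_comm]
          refine Finset.sum_congr rfl fun g' _ => ?_
          simp only [ite_mul, one_mul, zero_mul]
          rw [Finset.sum_ite_eq]
          simp
      _ = ∑ g' : Fin q → Fin n, ∑ k : Fin n, ∑ f' : Fin p → Fin n,
            ω₁ (fun i => E n (f' i)) (fun j => E n (g' j)) *
              F₂ (Fin.cons (E n k) (fun i => E n (f' i)))
                (Fin.cons (E n k) (fun j => E n (g' j))) := sum_swap3 _
      _ = ∑ f' : Fin p → Fin n, ∑ g' : Fin q → Fin n, ∑ k : Fin n,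
            ω₁ (fun i => E n (f' i)) (fun j => E n (g' j)) *
              F₂ (Fin.cons (E n k) (fun i => E n (f' i)))
                (Fin.cons (E n k) (fun j => E n (g' j))) := sum_swap3 _
      _ = ∑ f : Fin p → Fin n, ∑ g : Fin q → Fin n,
            ω₁ (fun i => E n (f i)) (fun j => E n (g j)) *
              contr ω₂ (fun i => E n (f i)) (fun j => E n (g j)) := by
          refine Finset.sum_congr rfl fun f' _ => Finset.sum_congr rfl fun g' _ => ?_
          simp only [contr, hF₂, ← Finset.mul_sum]
          rfl
  calc innerDF (mul (gm n) ω₁) (DFcast hp.symm hq.symm ω₂)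
      = ((((1 + p).factorial * (1 + q).factorial : ℕ)) : ℝ)⁻¹ *
          ∑ f : Fin (1 + p) → Fin n, ∑ g : Fin (1 + q) → Fin n,
            (((((Nat.factorial 1 * p.factorial * Nat.factorial 1 * q.factorial : ℕ)) : ℝ))⁻¹ *
              ∑ σ : Equiv.Perm (Fin (1 + p)), ∑ ρ : Equiv.Perm (Fin (1 + q)),
                ((Equiv.Perm.sign σ : ℤ) : ℝ) * (((Equiv.Perm.sign ρ : ℤ) : ℝ) *
                  (gm n (fun i => E n (f (σ (Fin.castAdd p i))))
                      (fun j => E n (g (ρ (Fin.castAdd q j)))) *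
                   ω₁ (fun i => E n (f (σ (Fin.natAdd 1 i))))
                      (fun j => E n (g (ρ (Fin.natAdd 1 j))))))) *
            DFcast hp.symm hq.symm ω₂ (fun i => E n (f i)) (fun j => E n (g j)) := by
        unfold innerDF mul
        beta_reduce
        refine congrArg (fun t => ((((1 + p).factorial * (1 + q).factorial : ℕ)) : ℝ)⁻¹ * t)
          (Finset.sum_congr rfl fun f _ => Finset.sum_congr rfl fun g _ => ?_)
        refine congrArg (fun t => (((Nat.factorial 1 * p.factorial * Nat.factorial 1 * q.factorial : ℕ) : ℝ)⁻¹ * t) *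
          DFcast hp.symm hq.symm ω₂ (fun i => E n (f i)) (fun j => E n (g j)))
          (Finset.sum_congr rfl fun σ _ => Finset.sum_congr rfl fun ρ _ => ?_)
        ring
    _ = ((((1 + p).factorial * (1 + q).factorial : ℕ)) : ℝ)⁻¹ *
          (((((Nat.factorial 1 * p.factorial * Nat.factorial 1 * q.factorial : ℕ)) : ℝ))⁻¹ *
            ∑ ρ : Equiv.Perm (Fin (1 + q)), ∑ g : Fin (1 + q) → Fin n,
              ∑ σ : Equiv.Perm (Fin (1 + p)), ∑ f : Fin (1 + p) → Fin n,
                ((Equiv.Perm.sign σ : ℤ) : ℝ) * (((Equiv.Perm.sign ρ : ℤ) : ℝ) *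
                  (gm n (fun i => E n (f (σ (Fin.castAdd p i))))
                      (fun j => E n (g (ρ (Fin.castAdd q j)))) *
                   ω₁ (fun i => E n (f (σ (Fin.natAdd 1 i))))
                      (fun j => E n (g (ρ (Fin.natAdd 1 j)))))) *
                DFcast hp.symm hq.symm ω₂ (fun i => E n (f i)) (fun j => E n (g j))) := by
        exact congrArg (fun t => ((((1 + p).factorial * (1 + q).factorial : ℕ)) : ℝ)⁻¹ * t) (flatten4 _ _ _)
    _ = ((((1 + p).factorial * (1 + q).factorial : ℕ)) : ℝ)⁻¹ *
          (((((Nat.factorial 1 * p.factorial * Nat.factorial 1 * q.factorial : ℕ)) : ℝ))⁻¹ *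
            ∑ ρ : Equiv.Perm (Fin (1 + q)), ∑ g : Fin (1 + q) → Fin n,
              ((1 + p).factorial : ℝ) * ∑ f : Fin (1 + p) → Fin n,
                (((Equiv.Perm.sign ρ : ℤ) : ℝ) *
                  (gm n (fun i => E n (f (Fin.castAdd p i)))
                      (fun j => E n (g (ρ (Fin.castAdd q j)))) *
                   ω₁ (fun i => E n (f (Fin.natAdd 1 i)))
                      (fun j => E n (g (ρ (Fin.natAdd 1 j)))))) *
                DFcast hp.symm hq.symm ω₂ (fun i => E n (f i)) (fun j => E n (g j))) := by
        refine congrArg (fun t => ((((1 + p).factorial * (1 + q).factorial : ℕ)) : ℝ)⁻¹ * (((Nat.factorial 1 * p.factorial * Nat.factorial 1 * q.factorial : ℕ) : ℝ)⁻¹ * t))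
          (Finset.sum_congr rfl fun ρ _ => Finset.sum_congr rfl fun g _ => ?_)
        exact perm_collapse
          (fun v => DFcast hp.symm hq.symm ω₂ v (fun j => E n (g j)))
          ⟨(evalAM (fun j => E n (g (Fin.cast hq.symm j)))).compAlternatingMap
             (F₂.domDomCongr (finCongr hp.symm)),
           fun v => by
            simp only [DFcast, hF₂, LinearMap.compAlternatingMap_apply,
              AlternatingMap.domDomCongr_apply, evalAM, LinearMap.coe_mk, AddHom.coe_mk,
              Function.comp_def, finCongr_apply]⟩
          (fun h => ((Equiv.Perm.sign ρ : ℤ) : ℝ) *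
            (gm n (fun i => E n (h (Fin.castAdd p i)))
                (fun j => E n (g (ρ (Fin.castAdd q j)))) *
             ω₁ (fun i => E n (h (Fin.natAdd 1 i)))
                (fun j => E n (g (ρ (Fin.natAdd 1 j))))))
    _ = ((((1 + p).factorial * (1 + q).factorial : ℕ)) : ℝ)⁻¹ *
          (((((Nat.factorial 1 * p.factorial * Nat.factorial 1 * q.factorial : ℕ)) : ℝ))⁻¹ *
            (((1 + p).factorial : ℝ) *
              ∑ ρ : Equiv.Perm (Fin (1 + q)), ∑ g : Fin (1 + q) → Fin n,
                ∑ f : Fin (1 + p) → Fin n,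
                  (((Equiv.Perm.sign ρ : ℤ) : ℝ) *
                    (gm n (fun i => E n (f (Fin.castAdd p i)))
                        (fun j => E n (g (ρ (Fin.castAdd q j)))) *
                     ω₁ (fun i => E n (f (Fin.natAdd 1 i)))
                        (fun j => E n (g (ρ (Fin.natAdd 1 j)))))) *
                  DFcast hp.symm hq.symm ω₂ (fun i => E n (f i)) (fun j => E n (g j)))) := by
        exact congrArg (fun t => ((((1 + p).factorial * (1 + q).factorial : ℕ)) : ℝ)⁻¹ * (((Nat.factorial 1 * p.factorial * Nat.factorial 1 * q.factorial : ℕ) : ℝ)⁻¹ * t)) (pull2 _ _)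
    _ = ((((1 + p).factorial * (1 + q).factorial : ℕ)) : ℝ)⁻¹ *
          (((((Nat.factorial 1 * p.factorial * Nat.factorial 1 * q.factorial : ℕ)) : ℝ))⁻¹ *
            (((1 + p).factorial : ℝ) *
              ∑ f : Fin (1 + p) → Fin n,
                ∑ ρ : Equiv.Perm (Fin (1 + q)), ∑ g : Fin (1 + q) → Fin n,
                  (((Equiv.Perm.sign ρ : ℤ) : ℝ) *
                    (gm n (fun i => E n (f (Fin.castAdd p i)))
                        (fun j => E n (g (ρ (Fin.castAdd q j)))) *
                     ω₁ (fun i => E n (f (Fin.natAdd 1 i)))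
                        (fun j => E n (g (ρ (Fin.natAdd 1 j)))))) *
                  DFcast hp.symm hq.symm ω₂ (fun i => E n (f i)) (fun j => E n (g j)))) := by
        exact congrArg (fun t => ((((1 + p).factorial * (1 + q).factorial : ℕ)) : ℝ)⁻¹ * (((Nat.factorial 1 * p.factorial * Nat.factorial 1 * q.factorial : ℕ) : ℝ)⁻¹ * (((1 + p).factorial : ℝ) * t))) (sum_swap3 _)
    _ = ((((1 + p).factorial * (1 + q).factorial : ℕ)) : ℝ)⁻¹ *
          (((((Nat.factorial 1 * p.factorial * Nat.factorial 1 * q.factorial : ℕ)) : ℝ))⁻¹ *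
            (((1 + p).factorial : ℝ) *
              ∑ f : Fin (1 + p) → Fin n,
                ((1 + q).factorial : ℝ) * ∑ g : Fin (1 + q) → Fin n,
                  (gm n (fun i => E n (f (Fin.castAdd p i)))
                      (fun j => E n (g (Fin.castAdd q j))) *
                   ω₁ (fun i => E n (f (Fin.natAdd 1 i)))
                      (fun j => E n (g (Fin.natAdd 1 j)))) *
                  DFcast hp.symm hq.symm ω₂ (fun i => E n (f i)) (fun j => E n (g j)))) := by
        refine congrArg (fun t => ((((1 + p).factorial * (1 + q).factorial : ℕ)) : ℝ)⁻¹ * (((Nat.factorial 1 * p.factorial * Nat.factorial 1 * q.factorial : ℕ) : ℝ)⁻¹ * (((1 + p).factorial : ℝ) * t)))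
          (Finset.sum_congr rfl fun f _ => ?_)
        exact perm_collapse
          (fun w => DFcast hp.symm hq.symm ω₂ (fun i => E n (f i)) w)
          ⟨(F₂ (fun i => E n (f (Fin.cast hp.symm i)))).domDomCongr (finCongr hq.symm),
           fun w => by
            simp only [DFcast, hF₂, AlternatingMap.domDomCongr_apply, Function.comp_def,
              finCongr_apply]⟩
          (fun h => gm n (fun i => E n (f (Fin.castAdd p i)))
              (fun j => E n (h (Fin.castAdd q j))) *
            ω₁ (fun i => E n (f (Fin.natAdd 1 i)))
              (fun j => E n (h (Fin.natAdd 1 j))))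
    _ = ((((1 + p).factorial * (1 + q).factorial : ℕ)) : ℝ)⁻¹ *
          (((((Nat.factorial 1 * p.factorial * Nat.factorial 1 * q.factorial : ℕ)) : ℝ))⁻¹ *
            (((1 + p).factorial : ℝ) * (((1 + q).factorial : ℝ) *
              ∑ f : Fin (1 + p) → Fin n, ∑ g : Fin (1 + q) → Fin n,
                  (gm n (fun i => E n (f (Fin.castAdd p i)))
                      (fun j => E n (g (Fin.castAdd q j))) *
                   ω₁ (fun i => E n (f (Fin.natAdd 1 i)))
                      (fun j => E n (g (Fin.natAdd 1 j)))) *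
                  DFcast hp.symm hq.symm ω₂ (fun i => E n (f i)) (fun j => E n (g j))))) := by
        exact congrArg (fun t => ((((1 + p).factorial * (1 + q).factorial : ℕ)) : ℝ)⁻¹ * (((Nat.factorial 1 * p.factorial * Nat.factorial 1 * q.factorial : ℕ) : ℝ)⁻¹ * (((1 + p).factorial : ℝ) * t))) (pull1 _ _)
    _ = (((p.factorial * q.factorial : ℕ)) : ℝ)⁻¹ *
          ∑ f : Fin (1 + p) → Fin n, ∑ g : Fin (1 + q) → Fin n,
            (gm n (fun i => E n (f (Fin.castAdd p i)))
                (fun j => E n (g (Fin.castAdd q j))) *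
             ω₁ (fun i => E n (f (Fin.natAdd 1 i)))
                (fun j => E n (g (Fin.natAdd 1 j)))) *
            DFcast hp.symm hq.symm ω₂ (fun i => E n (f i)) (fun j => E n (g j)) :=
        const_combine p q _
    _ = (((p.factorial * q.factorial : ℕ)) : ℝ)⁻¹ *
          ∑ f : Fin p → Fin n, ∑ g : Fin q → Fin n,
            ω₁ (fun i => E n (f i)) (fun j => E n (g j)) *
              contr ω₂ (fun i => E n (f i)) (fun j => E n (g j)) := by rw [hS]
    _ = innerDF ω₁ (contr ω₂) := rfl

end DoubleForm
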